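/- Let n ≥ 4 be an integer and let f assign to each triple (l, j, r) with 1 ≤ l < j < r ≤ n a complex number f(l, j, r), and assume f(l, j, r) depends only on the differences j − l and r − j. For a triangulation T (of P_n or of a sub-polygon) set S(T) = ∑ f(a, b, c) over all triangles {a, b, c} of T with a < b < c. For 1 ≤ l ≤ n − 1 let e_l = (1/C_{n−l−1}) · ∑_T S(T), the sum over all triangulations T of the sub-polygon on {l, …, n} (with e_{n−1} = 0, the sub-polygon on {n−1, n} having exactly one, empty, triangulation). Define β_j = ∑_{s=j+1}^{n−1} f(j, s, n) · C_{s−j−1} · C_{n−s−1} and λ_s = ∑_{j=s+1}^{n−1} C_{j−s−1} · C_{n−j−1} · ( f(s, j, n)² + 2·f(s, j, n)·(e_{s+n−j} + e_j) + 2·e_{s+n−j}·e_j ). Then E(S²) − (E(S))² = (1/C_{n−2}) · ∑_{j=1}^{n−2} λ_j · binom(2j−2, j−1) − ( (1/C_{n−2}) · ∑_{j=1}^{n−2} β_j · binom(2j−2, j−1) )², where E(X) = (1/C_{n−2}) ∑_T X(T) with T ranging over all triangulations of P_n. -/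

import Mathlib

open Finset
open scoped Classical

/-- `IsDiag l r i j` : the pair `{i, j}` (written with `i < j`) is a diagonal of the
convex sub-polygon on vertices `{l, …, r}`. -/
def IsDiag (l r i j : ℕ) : Prop :=
  l ≤ i ∧ i + 2 ≤ j ∧ j ≤ r ∧ ¬(i = l ∧ j = r)

/-- Two diagonals `{a, b}` and `{c, d}` (written with `a < b`, `c < d`) cross. -/
def Crosses (a b c d : ℕ) : Prop :=
  (a < c ∧ c < b ∧ b < d) ∨ (c < a ∧ a < d ∧ d < b)

/-- All diagonals of the sub-polygon on `{l, …, r}`, as ordered pairs. -/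
noncomputable def allDiags (l r : ℕ) : Finset (ℕ × ℕ) :=
  (range (r + 1) ×ˢ range (r + 1)).filter fun p => IsDiag l r p.1 p.2

/-- The triangulations of the sub-polygon on `{l, …, r}` : sets of `r - l - 2`
pairwise noncrossing diagonals. -/
noncomputable def triangulations (l r : ℕ) : Finset (Finset (ℕ × ℕ)) :=
  (allDiags l r).powerset.filter fun T =>
    T.card = r - l - 2 ∧ ∀ d ∈ T, ∀ e ∈ T, ¬ Crosses d.1 d.2 e.1 e.2

/-- `IsEdge l r i j` : the pair `{i, j}` (with `i < j`) is an edge (boundary side) of the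
sub-polygon on `{l, …, r}`. -/
def IsEdge (l r i j : ℕ) : Prop :=
  (l ≤ i ∧ j = i + 1 ∧ j ≤ r) ∨ (i = l ∧ j = r)

/-- `{i, j}` is a side available in the triangulation `T` (an edge of the polygon or a
diagonal of `T`). -/
def IsSide (l r : ℕ) (T : Finset (ℕ × ℕ)) (i j : ℕ) : Prop :=
  IsEdge l r i j ∨ (i, j) ∈ T

/-- The triangles of a triangulation `T` of the sub-polygon on `{l, …, r}`, as ordered
triples `(a, b, c)` with `a < b < c`, each of whose three sides is an edge or a diagonal
of `T`. -/
noncomputable def triangles (l r : ℕ) (T : Finset (ℕ × ℕ)) : Finset (ℕ × ℕ × ℕ) :=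
  (range (r + 1) ×ˢ range (r + 1) ×ˢ range (r + 1)).filter fun t =>
    t.1 < t.2.1 ∧ t.2.1 < t.2.2 ∧
      IsSide l r T t.1 t.2.1 ∧ IsSide l r T t.2.1 t.2.2 ∧ IsSide l r T t.1 t.2.2

/-- The number of sides of the triangle `{a, b, c}` (with `a < b < c`) that are edges of
the sub-polygon on `{l, …, r}`. -/
noncomputable def edgeCount (l r a b c : ℕ) : ℕ :=
  (if IsEdge l r a b then 1 else 0) + (if IsEdge l r b c then 1 else 0) +
    (if IsEdge l r a c then 1 else 0)

/-- `O(T)` : the number of triangles of `T` with exactly one side an edge of `P_n`. -/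
noncomputable def oneSideCount (n : ℕ) (T : Finset (ℕ × ℕ)) : ℕ :=
  ((triangles 1 n T).filter fun t => edgeCount 1 n t.1 t.2.1 t.2.2 = 1).card

/-- `Ear(T)` : the number of triangles of `T` with at least two sides edges of `P_n`. -/
noncomputable def earCount (n : ℕ) (T : Finset (ℕ × ℕ)) : ℕ :=
  ((triangles 1 n T).filter fun t => 2 ≤ edgeCount 1 n t.1 t.2.1 t.2.2).card

/-- `D(T)` : the number of triangles of `T` containing vertex `1`. -/
noncomputable def degOne (n : ℕ) (T : Finset (ℕ × ℕ)) : ℕ :=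
  ((triangles 1 n T).filter fun t => t.1 = 1 ∨ t.2.1 = 1 ∨ t.2.2 = 1).card

/-- `B(T)` : the number of triangles `{l, j, r}` of `T` (with `l < j < r`) such that
`j - l = 1`. -/
noncomputable def blueCount (n : ℕ) (T : Finset (ℕ × ℕ)) : ℕ :=
  ((triangles 1 n T).filter fun t => t.2.1 - t.1 = 1).card

/-- `A_i(T)` : the number of triangles `{1, a, b}` of `T` containing vertex `1`
(written with `1 < a < b`) such that `b - a = i`. -/
noncomputable def angleCount (n : ℕ) (T : Finset (ℕ × ℕ)) (i : ℕ) : ℕ :=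
  ((triangles 1 n T).filter fun t => t.1 = 1 ∧ t.2.2 - t.2.1 = i).card

lemma mem_allDiags {l r : ℕ} {p : ℕ × ℕ} :
    p ∈ allDiags l r ↔ IsDiag l r p.1 p.2 := by
  unfold allDiags
  simp only [mem_filter, mem_product, mem_range]
  exact ⟨fun h => h.2, fun h => ⟨⟨by unfold IsDiag at h; omega, by unfold IsDiag at h; omega⟩, h⟩⟩

lemma mem_allDiags' {l r a b : ℕ} :
    (a, b) ∈ allDiags l r ↔ (l ≤ a ∧ a + 2 ≤ b ∧ b ≤ r ∧ ¬(a = l ∧ b = r)) :=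
  mem_allDiags

lemma mem_triangulations {l r : ℕ} {T : Finset (ℕ × ℕ)} :
    T ∈ triangulations l r ↔
      T ⊆ allDiags l r ∧ T.card = r - l - 2 ∧
        ∀ d ∈ T, ∀ e ∈ T, ¬ Crosses d.1 d.2 e.1 e.2 := by
  unfold triangulations
  simp [mem_filter, mem_powerset, and_assoc]

private def psi (b K x : ℕ) : ℕ := if x < b then x else x - K

/-- Any noncrossing set of diagonals of the polygon on `{l,…,r}` has at most
`r - l - 2` elements. -/
lemma card_le_of_noncrossing :
    ∀ N (l r : ℕ) (T : Finset (ℕ × ℕ)), T.card ≤ N → T ⊆ allDiags l r →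
      (∀ d ∈ T, ∀ e ∈ T, ¬ Crosses d.1 d.2 e.1 e.2) → T.card ≤ r - l - 2 := by
  intro N
  induction N with
  | zero => intro l r T h _ _; omega
  | succ N ih =>
    intro l r T hcard hsub hnc
    rcases T.eq_empty_or_nonempty with rfl | hne
    · simp
    obtain ⟨⟨a, b⟩, habT, hmin⟩ := T.exists_min_image (fun p => p.2 - p.1) hne
    have habD := mem_allDiags'.mp (hsub habT)
    obtain ⟨hla, hab2, hbr, hnlr⟩ := habD
    have havoid : ∀ p ∈ T, p ≠ (a, b) → (p.1 ≤ a ∨ b ≤ p.1) ∧ (p.2 ≤ a ∨ b ≤ p.2) := by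
      rintro ⟨c, d⟩ hp hne'
      have hD := mem_allDiags'.mp (hsub hp)
      have hm := hmin _ hp
      have hnc1 := hnc _ habT _ hp
      simp only [Crosses] at hnc1
      simp only [ne_eq, Prod.mk.injEq, not_and] at hne'
      dsimp only at hD hm ⊢
      omega
    obtain ⟨K, hK⟩ : ∃ K, b = a + 1 + K := ⟨b - a - 1, by omega⟩
    set T' := (T.erase (a, b)).image (fun p => (psi b K p.1, psi b K p.2)) with hT'
    have hmem' : ∀ p ∈ T.erase (a, b), (p.1 ≤ a ∨ b ≤ p.1) ∧ (p.2 ≤ a ∨ b ≤ p.2) := by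
      intro p hp
      exact havoid p (mem_of_mem_erase hp) (ne_of_mem_erase hp)
    have hinj : Set.InjOn (fun p : ℕ × ℕ => (psi b K p.1, psi b K p.2)) (T.erase (a, b)) := by
      rintro ⟨c, d⟩ hc ⟨e, g⟩ he hEq
      have h1 := hmem' _ hc
      have h2 := hmem' _ he
      simp only [Prod.mk.injEq, psi] at hEq ⊢
      dsimp only at h1 h2
      split_ifs at hEq <;> omega
    have hsub' : T' ⊆ allDiags l (r - K) := by
      intro q hq
      rw [hT', mem_image] at hq
      obtain ⟨⟨c, d⟩, hp, rfl⟩ := hq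
      have h1 := hmem' _ hp
      have hpne := ne_of_mem_erase hp
      have hD := mem_allDiags'.mp (hsub (mem_of_mem_erase hp))
      rw [mem_allDiags]
      simp only [IsDiag, psi]
      simp only [ne_eq, Prod.mk.injEq, not_and] at hpne
      dsimp only at h1 hD ⊢
      split_ifs <;> omega
    have hnc' : ∀ d ∈ T', ∀ e ∈ T', ¬ Crosses d.1 d.2 e.1 e.2 := by
      intro q1 hq1 q2 hq2
      rw [hT', mem_image] at hq1 hq2
      obtain ⟨⟨c, d⟩, hp1, rfl⟩ := hq1
      obtain ⟨⟨e, g⟩, hp2, rfl⟩ := hq2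
      have h1 := hmem' _ hp1
      have h2 := hmem' _ hp2
      have hncx := hnc _ (mem_of_mem_erase hp1) _ (mem_of_mem_erase hp2)
      simp only [Crosses, psi] at hncx ⊢
      dsimp only at h1 h2
      split_ifs <;> omega
    have hcard' : T'.card = T.card - 1 := by
      rw [hT', card_image_of_injOn hinj, card_erase_of_mem habT]
    have hle : T'.card ≤ (r - K) - l - 2 := by
      apply ih l (r - K) T' _ hsub' hnc'
      omega
    omega
noncomputable def glue (l r j : ℕ) (T₁ T₂ : Finset (ℕ × ℕ)) : Finset (ℕ × ℕ) :=
  (T₁ ∪ T₂) ∪ ((if l + 1 < j then {(l, j)} else ∅) ∪ (if j + 1 < r then {(j, r)} else ∅))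

lemma mem_glue {l r j : ℕ} {T₁ T₂ : Finset (ℕ × ℕ)} {p : ℕ × ℕ} :
    p ∈ glue l r j T₁ T₂ ↔
      p ∈ T₁ ∨ p ∈ T₂ ∨ (l + 1 < j ∧ p = (l, j)) ∨ (j + 1 < r ∧ p = (j, r)) := by
  unfold glue
  simp only [mem_union]
  split_ifs with h1 h2 h2 <;> simp <;> tauto

lemma diag_fact {l r : ℕ} {T : Finset (ℕ × ℕ)} (hsub : T ⊆ allDiags l r) {c d : ℕ}
    (h : (c, d) ∈ T) : l ≤ c ∧ c + 2 ≤ d ∧ d ≤ r ∧ ¬(c = l ∧ d = r) :=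
  mem_allDiags'.mp (hsub h)

lemma glue_subset {l r j : ℕ} {T₁ T₂ : Finset (ℕ × ℕ)}
    (h1 : T₁ ⊆ allDiags l j) (h2 : T₂ ⊆ allDiags j r) (hj1 : l < j) (hj2 : j < r) :
    glue l r j T₁ T₂ ⊆ allDiags l r := by
  intro ⟨c, d⟩ hp
  rw [mem_glue] at hp
  rw [mem_allDiags']
  rcases hp with hp | hp | ⟨h, hp⟩ | ⟨h, hp⟩
  · have := diag_fact h1 hp; omega
  · have := diag_fact h2 hp; omega
  · simp only [Prod.mk.injEq] at hp; omega
  · simp only [Prod.mk.injEq] at hp; omega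

lemma glue_noncross {l r j : ℕ} {T₁ T₂ : Finset (ℕ × ℕ)}
    (h1 : T₁ ⊆ allDiags l j) (h2 : T₂ ⊆ allDiags j r) (hj1 : l < j) (hj2 : j < r)
    (hnc1 : ∀ d ∈ T₁, ∀ e ∈ T₁, ¬ Crosses d.1 d.2 e.1 e.2)
    (hnc2 : ∀ d ∈ T₂, ∀ e ∈ T₂, ¬ Crosses d.1 d.2 e.1 e.2) :
    ∀ d ∈ glue l r j T₁ T₂, ∀ e ∈ glue l r j T₁ T₂, ¬ Crosses d.1 d.2 e.1 e.2 := by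
  intro ⟨c, d⟩ hcd ⟨e, g⟩ heg
  rw [mem_glue] at hcd heg
  rcases hcd with hp | hp | ⟨h, hp⟩ | ⟨h, hp⟩ <;>
    rcases heg with hq | hq | ⟨h', hq⟩ | ⟨h', hq⟩ <;>
    [skip; skip; skip; skip; skip; skip; skip; skip; skip; skip; skip; skip; skip; skip;
      skip; skip] <;>
    first
      | (exact hnc1 _ hp _ hq)
      | (exact hnc2 _ hp _ hq)
      | (first
          | (have B1 := diag_fact h1 hp) | (have B1 := diag_fact h2 hp)
          | (simp only [Prod.mk.injEq] at hp)) <;>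
        (first
          | (have B2 := diag_fact h1 hq) | (have B2 := diag_fact h2 hq)
          | (simp only [Prod.mk.injEq] at hq)) <;>
        (simp only [Crosses]; omega)

lemma glue_card {l r j : ℕ} {T₁ T₂ : Finset (ℕ × ℕ)}
    (h1 : T₁ ⊆ allDiags l j) (h2 : T₂ ⊆ allDiags j r) (hj1 : l < j) (hj2 : j < r) :
    (glue l r j T₁ T₂).card =
      T₁.card + T₂.card + (if l + 1 < j then 1 else 0) + (if j + 1 < r then 1 else 0) := by
  have hd12 : Disjoint T₁ T₂ := by
    rw [Finset.disjoint_left]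
    intro ⟨c, d⟩ hc hc2
    have b1 := diag_fact h1 hc
    have b2 := diag_fact h2 hc2
    omega
  have hlj1 : (l, j) ∉ T₁ := fun h => by have := diag_fact h1 h; omega
  have hlj2 : (l, j) ∉ T₂ := fun h => by have := diag_fact h2 h; omega
  have hjr1 : (j, r) ∉ T₁ := fun h => by have := diag_fact h1 h; omega
  have hjr2 : (j, r) ∉ T₂ := fun h => by have := diag_fact h2 h; omega
  have hne : (l, j) ≠ (j, r) := by simp only [ne_eq, Prod.mk.injEq]; omega
  have hdisjX : Disjoint (T₁ ∪ T₂)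
      ((if l + 1 < j then ({(l, j)} : Finset (ℕ × ℕ)) else ∅) ∪
        (if j + 1 < r then ({(j, r)} : Finset (ℕ × ℕ)) else ∅)) := by
    rw [Finset.disjoint_right]
    intro p hp hp2
    rw [mem_union] at hp hp2
    rcases hp with hp | hp <;> split_ifs at hp <;> simp at hp <;> subst hp <;>
      rcases hp2 with h | h <;> simp_all
  have hX : ((if l + 1 < j then ({(l, j)} : Finset (ℕ × ℕ)) else ∅) ∪
      (if j + 1 < r then ({(j, r)} : Finset (ℕ × ℕ)) else ∅)).card =
      (if l + 1 < j then 1 else 0) + (if j + 1 < r then 1 else 0) := by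
    split_ifs with hA hB hB
    · rw [show ({(l, j)} : Finset (ℕ × ℕ)) ∪ {(j, r)} = insert (l, j) {(j, r)} by
          ext p; simp [or_comm],
        Finset.card_insert_of_notMem (by simp [hne]), Finset.card_singleton]
    · simp
    · simp
    · simp
  unfold glue
  rw [card_union_of_disjoint hdisjX, card_union_of_disjoint hd12, hX]
  omega
lemma glue_mem_triangulations {l r j : ℕ} {T₁ T₂ : Finset (ℕ × ℕ)} (hj1 : l < j) (hj2 : j < r)
    (h1 : T₁ ∈ triangulations l j) (h2 : T₂ ∈ triangulations j r) :
    glue l r j T₁ T₂ ∈ triangulations l r := by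
  rw [mem_triangulations] at h1 h2 ⊢
  obtain ⟨hs1, hc1, hn1⟩ := h1
  obtain ⟨hs2, hc2, hn2⟩ := h2
  refine ⟨glue_subset hs1 hs2 hj1 hj2, ?_, glue_noncross hs1 hs2 hj1 hj2 hn1 hn2⟩
  rw [glue_card hs1 hs2 hj1 hj2, hc1, hc2]
  split_ifs <;> omega

/-- the "splitter" property: `j` is the apex of the triangle resting on the long side
`{l, r}`. -/
def Splitter (l r : ℕ) (T : Finset (ℕ × ℕ)) (j : ℕ) : Prop :=
  l < j ∧ j < r ∧ (j = l + 1 ∨ (l, j) ∈ T) ∧ (j + 1 = r ∨ (j, r) ∈ T)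

lemma glue_splitter {l r j : ℕ} {T₁ T₂ : Finset (ℕ × ℕ)} (hj1 : l < j) (hj2 : j < r) :
    Splitter l r (glue l r j T₁ T₂) j := by
  refine ⟨hj1, hj2, ?_, ?_⟩
  · rcases Nat.lt_or_ge (l + 1) j with h | h
    · exact Or.inr (mem_glue.mpr (Or.inr (Or.inr (Or.inl ⟨h, rfl⟩))))
    · exact Or.inl (by omega)
  · rcases Nat.lt_or_ge (j + 1) r with h | h
    · exact Or.inr (mem_glue.mpr (Or.inr (Or.inr (Or.inr ⟨h, rfl⟩))))
    · exact Or.inl (by omega)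

lemma splitter_unique {l r : ℕ} {T : Finset (ℕ × ℕ)} (hT : T ∈ triangulations l r)
    {j j' : ℕ} (hj : Splitter l r T j) (hj' : Splitter l r T j') : j = j' := by
  rw [mem_triangulations] at hT
  obtain ⟨hsub, hcard, hnc⟩ := hT
  by_contra hne
  -- wlog j < j'
  have key : ∀ a b : ℕ, Splitter l r T a → Splitter l r T b → a < b → False := by
    intro a b ha hb hab
    obtain ⟨ha1, ha2, haL, haR⟩ := ha
    obtain ⟨hb1, hb2, hbL, hbR⟩ := hb
    have hlb : (l, b) ∈ T := by
      rcases hbL with h | h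
      · omega
      · exact h
    have har : (a, r) ∈ T := by
      rcases haR with h | h
      · omega
      · exact h
    have := hnc _ hlb _ har
    simp only [Crosses] at this
    omega
  rcases Nat.lt_or_ge j j' with h | h
  · exact key _ _ hj hj' h
  · exact key _ _ hj' hj (by omega)

lemma exists_splitter {l r : ℕ} (h2 : l + 2 ≤ r) {T : Finset (ℕ × ℕ)}
    (hT : T ∈ triangulations l r) : ∃ j, Splitter l r T j := by
  rw [mem_triangulations] at hT
  obtain ⟨hsub, hcard, hnc⟩ := hT
  rcases Nat.eq_or_lt_of_le h2 with hr | hr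
  · exact ⟨l + 1, by omega, by omega, Or.inl rfl, Or.inl (by omega)⟩
  by_cases hM : ∃ m, (m, r) ∈ T
  · -- take the minimal m with (m, r) ∈ T
    have hMne : (T.filter fun p => p.2 = r).Nonempty := by
      obtain ⟨m, hm⟩ := hM
      exact ⟨(m, r), mem_filter.mpr ⟨hm, rfl⟩⟩
    obtain ⟨⟨m, rr⟩, hmem, hminm⟩ := (T.filter fun p => p.2 = r).exists_min_image
      (fun p => p.1) hMne
    rw [mem_filter] at hmem
    obtain ⟨hmT, hrr⟩ := hmem
    dsimp only at hrr
    subst hrr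
    have hmD := diag_fact hsub hmT
    refine ⟨m, by omega, by omega, ?_, Or.inr hmT⟩
    rcases Nat.lt_or_ge (l + 1) m with hlm | hlm
    swap
    · exact Or.inl (by omega)
    right
    by_contra hnotin
    -- counting contradiction
    set T₁ := T.filter (fun p => p.2 ≤ m) with hT₁
    set T₂ := T.filter (fun p => m ≤ p.1 ∧ p ≠ (m, rr)) with hT₂
    have hcov : T ⊆ T₁ ∪ T₂ ∪ {(m, rr)} := by
      intro ⟨c, d⟩ hp
      have hD := diag_fact hsub hp
      simp only [mem_union, hT₁, hT₂, mem_filter, mem_singleton, Prod.mk.injEq, ne_eq]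
      by_cases hcd : d ≤ m
      · exact Or.inl (Or.inl ⟨hp, hcd⟩)
      by_cases hcm : m ≤ c
      · by_cases he : c = m ∧ d = rr
        · exact Or.inr (by simp [he.1, he.2])
        · exact Or.inl (Or.inr ⟨hp, hcm, by tauto⟩)
      -- c < m < d : contradiction
      exfalso
      push_neg at hcd hcm
      by_cases hdr : d = rr
      · subst hdr
        have := hminm (c, d) (mem_filter.mpr ⟨hp, rfl⟩)
        dsimp only at this
        omega
      · have := hnc _ hmT _ hp
        simp only [Crosses] at this
        omega
    have hc1 : T₁.card ≤ m - l - 2 := by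
      apply card_le_of_noncrossing T₁.card l m _ le_rfl
      · intro ⟨c, d⟩ hp
        rw [hT₁, mem_filter] at hp
        have hD := diag_fact hsub hp.1
        rw [mem_allDiags']
        have : ¬(c = l ∧ d = m) := by
          rintro ⟨rfl, rfl⟩; exact hnotin hp.1
        have := hp.2
        dsimp only at this
        omega
      · intro d hd e he
        rw [hT₁, mem_filter] at hd he
        exact hnc _ hd.1 _ he.1
    have hc2 : T₂.card ≤ rr - m - 2 := by
      apply card_le_of_noncrossing T₂.card m rr _ le_rfl
      · intro ⟨c, d⟩ hp
        rw [hT₂, mem_filter] at hp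
        have hD := diag_fact hsub hp.1
        rw [mem_allDiags']
        obtain ⟨hm1, hm2⟩ := hp.2
        dsimp only at hm1
        simp only [ne_eq, Prod.mk.injEq, not_and] at hm2
        omega
      · intro d hd e he
        rw [hT₂, mem_filter] at hd he
        exact hnc _ hd.1 _ he.1
    have hle := card_le_card hcov
    have hle2 : (T₁ ∪ T₂ ∪ {(m, rr)}).card ≤ T₁.card + T₂.card + 1 := by
      calc (T₁ ∪ T₂ ∪ {(m, rr)}).card ≤ (T₁ ∪ T₂).card + ({(m, rr)} : Finset (ℕ × ℕ)).card :=
            card_union_le _ _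
        _ ≤ T₁.card + T₂.card + 1 := by
            have := card_union_le T₁ T₂
            simp only [card_singleton]
            omega
    have := hle.trans hle2
    omega
  · -- no diagonal ends at r
    push_neg at hM
    by_cases hlr : (l, r - 1) ∈ T
    · exact ⟨r - 1, by omega, by omega, Or.inr hlr, Or.inl (by omega)⟩
    · exfalso
      have : T.card ≤ (r - 1) - l - 2 := by
        apply card_le_of_noncrossing T.card l (r - 1) _ le_rfl _ hnc
        intro ⟨c, d⟩ hp
        have hD := diag_fact hsub hp
        rw [mem_allDiags']
        have hdr : d ≠ r := fun h => hM c (h ▸ hp)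
        have : ¬(c = l ∧ d = r - 1) := by
          rintro ⟨rfl, rfl⟩; exact hlr hp
        omega
      omega
lemma no_straddle {l r : ℕ} {T : Finset (ℕ × ℕ)} (hT : T ∈ triangulations l r)
    {j : ℕ} (hs : Splitter l r T j) : ∀ p ∈ T, p.2 ≤ j ∨ j ≤ p.1 := by
  rw [mem_triangulations] at hT
  obtain ⟨hsub, hcard, hnc⟩ := hT
  obtain ⟨hj1, hj2, hsL, hsR⟩ := hs
  intro ⟨c, d⟩ hp
  dsimp only
  have hD := diag_fact hsub hp
  by_contra hcon
  push_neg at hcon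
  obtain ⟨hd, hc⟩ := hcon
  -- c < j < d
  rcases hsL with hL | hL
  · -- j = l + 1, so c = l
    have hcl : c = l := by omega
    subst hcl
    have hdr : d ≠ r := by tauto
    rcases hsR with hR | hR
    · omega
    · have := hnc _ hR _ hp
      simp only [Crosses] at this
      omega
  · rcases Nat.lt_or_ge l c with hlc | hlc
    · have := hnc _ hL _ hp
      simp only [Crosses] at this
      omega
    · have hcl : c = l := by omega
      subst hcl
      have hdr : d ≠ r := by tauto
      rcases hsR with hR | hR
      · omega
      · have := hnc _ hR _ hp
        simp only [Crosses] at this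
        omega

lemma split_decomp {l r : ℕ} {T : Finset (ℕ × ℕ)} (hT : T ∈ triangulations l r)
    {j : ℕ} (hs : Splitter l r T j) :
    (T.filter fun p => p.2 ≤ j ∧ p ≠ (l, j)) ∈ triangulations l j ∧
    (T.filter fun p => j ≤ p.1 ∧ p ≠ (j, r)) ∈ triangulations j r ∧
    T = glue l r j (T.filter fun p => p.2 ≤ j ∧ p ≠ (l, j))
      (T.filter fun p => j ≤ p.1 ∧ p ≠ (j, r)) := by
  have hstr := no_straddle hT hs
  rw [mem_triangulations] at hT
  obtain ⟨hsub, hcard, hnc⟩ := hT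
  obtain ⟨hj1, hj2, hsL, hsR⟩ := hs
  set T₁ := T.filter (fun p => p.2 ≤ j ∧ p ≠ (l, j)) with hT₁
  set T₂ := T.filter (fun p => j ≤ p.1 ∧ p ≠ (j, r)) with hT₂
  have hsub1 : T₁ ⊆ allDiags l j := by
    intro ⟨c, d⟩ hp
    rw [hT₁, mem_filter] at hp
    obtain ⟨hpT, hd, hne⟩ := hp
    have hD := diag_fact hsub hpT
    rw [mem_allDiags']
    simp only [ne_eq, Prod.mk.injEq, not_and] at hne
    dsimp only at hd
    omega
  have hsub2 : T₂ ⊆ allDiags j r := by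
    intro ⟨c, d⟩ hp
    rw [hT₂, mem_filter] at hp
    obtain ⟨hpT, hd, hne⟩ := hp
    have hD := diag_fact hsub hpT
    rw [mem_allDiags']
    simp only [ne_eq, Prod.mk.injEq, not_and] at hne
    dsimp only at hd
    omega
  have hnc1 : ∀ d ∈ T₁, ∀ e ∈ T₁, ¬ Crosses d.1 d.2 e.1 e.2 := by
    intro d hd e he
    rw [hT₁, mem_filter] at hd he
    exact hnc _ hd.1 _ he.1
  have hnc2 : ∀ d ∈ T₂, ∀ e ∈ T₂, ¬ Crosses d.1 d.2 e.1 e.2 := by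
    intro d hd e he
    rw [hT₂, mem_filter] at hd he
    exact hnc _ hd.1 _ he.1
  have hEq : T = glue l r j T₁ T₂ := by
    ext ⟨c, d⟩
    rw [mem_glue]
    constructor
    · intro hp
      have hD := diag_fact hsub hp
      rcases hstr _ hp with hle | hge
      · dsimp only at hle
        by_cases he : (c, d) = (l, j)
        · rw [Prod.mk.injEq] at he
          exact Or.inr (Or.inr (Or.inl ⟨by omega, by rw [Prod.mk.injEq]; omega⟩))
        · exact Or.inl (mem_filter.mpr ⟨hp, hle, he⟩)
      · dsimp only at hge
        by_cases he : (c, d) = (j, r)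
        · rw [Prod.mk.injEq] at he
          exact Or.inr (Or.inr (Or.inr ⟨by omega, by rw [Prod.mk.injEq]; omega⟩))
        · exact Or.inr (Or.inl (mem_filter.mpr ⟨hp, hge, he⟩))
    · intro hp
      rcases hp with hp | hp | ⟨hlt, hp⟩ | ⟨hlt, hp⟩
      · exact (mem_filter.mp (hT₁ ▸ hp)).1
      · exact (mem_filter.mp (hT₂ ▸ hp)).1
      · rcases hsL with h | h
        · omega
        · rw [hp]; exact h
      · rcases hsR with h | h
        · omega
        · rw [hp]; exact h
  have hc1 : T₁.card ≤ j - l - 2 := card_le_of_noncrossing T₁.card l j T₁ le_rfl hsub1 hnc1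
  have hc2 : T₂.card ≤ r - j - 2 := card_le_of_noncrossing T₂.card j r T₂ le_rfl hsub2 hnc2
  have hgc : T.card = T₁.card + T₂.card +
      (if l + 1 < j then 1 else 0) + (if j + 1 < r then 1 else 0) := by
    rw [hEq]; exact glue_card hsub1 hsub2 hj1 hj2
  have hcards : T₁.card = j - l - 2 ∧ T₂.card = r - j - 2 := by
    split_ifs at hgc <;> omega
  refine ⟨?_, ?_, hEq⟩
  · exact mem_triangulations.mpr ⟨hsub1, hcards.1, hnc1⟩
  · exact mem_triangulations.mpr ⟨hsub2, hcards.2, hnc2⟩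

lemma glue_recover₁ {l r j : ℕ} {T₁ T₂ : Finset (ℕ × ℕ)}
    (h1 : T₁ ⊆ allDiags l j) (h2 : T₂ ⊆ allDiags j r) :
    (glue l r j T₁ T₂).filter (fun p => p.2 ≤ j ∧ p ≠ (l, j)) = T₁ := by
  ext ⟨c, d⟩
  rw [mem_filter, mem_glue]
  constructor
  · rintro ⟨hm, hd, hne⟩
    dsimp only at hd
    rcases hm with h | h | ⟨hlt, h⟩ | ⟨hlt, h⟩
    · exact h
    · have := diag_fact h2 h; omega
    · exact absurd h hne
    · rw [Prod.mk.injEq] at h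
      omega
  · intro h
    have := diag_fact h1 h
    refine ⟨Or.inl h, by omega, ?_⟩
    simp only [ne_eq, Prod.mk.injEq]
    omega

lemma glue_recover₂ {l r j : ℕ} {T₁ T₂ : Finset (ℕ × ℕ)}
    (h1 : T₁ ⊆ allDiags l j) (h2 : T₂ ⊆ allDiags j r) :
    (glue l r j T₁ T₂).filter (fun p => j ≤ p.1 ∧ p ≠ (j, r)) = T₂ := by
  ext ⟨c, d⟩
  rw [mem_filter, mem_glue]
  constructor
  · rintro ⟨hm, hd, hne⟩
    dsimp only at hd
    rcases hm with h | h | ⟨hlt, h⟩ | ⟨hlt, h⟩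
    · have := diag_fact h1 h; omega
    · exact h
    · rw [Prod.mk.injEq] at h; omega
    · exact absurd h hne
  · intro h
    have := diag_fact h2 h
    refine ⟨Or.inr (Or.inl h), by omega, ?_⟩
    simp only [ne_eq, Prod.mk.injEq]
    omega
lemma sum_decomp {M : Type*} [AddCommMonoid M] (l r : ℕ) (h2 : l + 2 ≤ r)
    (G : Finset (ℕ × ℕ) → M) :
    ∑ T ∈ triangulations l r, G T =
      ∑ j ∈ Ioo l r, ∑ T₁ ∈ triangulations l j, ∑ T₂ ∈ triangulations j r,
        G (glue l r j T₁ T₂) := by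
  have hstep : ∀ j ∈ Ioo l r,
      (∑ T₁ ∈ triangulations l j, ∑ T₂ ∈ triangulations j r, G (glue l r j T₁ T₂)) =
        ∑ p ∈ triangulations l j ×ˢ triangulations j r, G (glue l r j p.1 p.2) := by
    intro j _
    rw [Finset.sum_product]
  rw [Finset.sum_congr rfl hstep,
    ← Finset.sum_sigma (Ioo l r) (fun j => triangulations l j ×ˢ triangulations j r)
      (fun x => G (glue l r x.1 x.2.1 x.2.2))]
  symm
  apply Finset.sum_bij (fun x _ => glue l r x.1 x.2.1 x.2.2)
  · rintro ⟨j, T₁, T₂⟩ hx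
    rw [Finset.mem_sigma, Finset.mem_product, Finset.mem_Ioo] at hx
    exact glue_mem_triangulations hx.1.1 hx.1.2 hx.2.1 hx.2.2
  · rintro ⟨j, T₁, T₂⟩ hx ⟨j', T₁', T₂'⟩ hx' hEq
    rw [Finset.mem_sigma, Finset.mem_product, Finset.mem_Ioo] at hx hx'
    obtain ⟨⟨hj1, hj2⟩, hm1, hm2⟩ := hx
    obtain ⟨⟨hj1', hj2'⟩, hm1', hm2'⟩ := hx'
    dsimp only at hEq hj1 hj2 hm1 hm2 hj1' hj2' hm1' hm2'
    have hmem := glue_mem_triangulations hj1 hj2 hm1 hm2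
    have hjj : j = j' := by
      apply splitter_unique hmem (glue_splitter hj1 hj2)
      rw [hEq]
      exact glue_splitter hj1' hj2'
    subst hjj
    have hs1 := (mem_triangulations.mp hm1).1
    have hs2 := (mem_triangulations.mp hm2).1
    have hs1' := (mem_triangulations.mp hm1').1
    have hs2' := (mem_triangulations.mp hm2').1
    have e1 : T₁ = T₁' := by
      rw [← glue_recover₁ hs1 hs2, hEq, glue_recover₁ hs1' hs2']
    have e2 : T₂ = T₂' := by
      rw [← glue_recover₂ hs1 hs2, hEq, glue_recover₂ hs1' hs2']
    subst e1; subst e2; rfl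
  · intro T hT
    obtain ⟨j, hsplit⟩ := exists_splitter h2 hT
    obtain ⟨hm1, hm2, hglue⟩ := split_decomp hT hsplit
    refine ⟨⟨j, (T.filter fun p => p.2 ≤ j ∧ p ≠ (l, j),
      T.filter fun p => j ≤ p.1 ∧ p ≠ (j, r))⟩, ?_, hglue.symm⟩
    rw [Finset.mem_sigma, Finset.mem_product, Finset.mem_Ioo]
    exact ⟨⟨hsplit.1, hsplit.2.1⟩, hm1, hm2⟩
  · intro a ha
    rfl
lemma mem_triangles {l r : ℕ} {T : Finset (ℕ × ℕ)} {a b c : ℕ} :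
    (a, b, c) ∈ triangles l r T ↔
      a < b ∧ b < c ∧ c ≤ r ∧ IsSide l r T a b ∧ IsSide l r T b c ∧ IsSide l r T a c := by
  unfold triangles
  simp only [mem_filter, mem_product, mem_range]
  constructor
  · rintro ⟨⟨h1, h2, h3⟩, h4, h5, h6, h7, h8⟩
    exact ⟨h4, h5, by omega, h6, h7, h8⟩
  · rintro ⟨h1, h2, h3, h4, h5, h6⟩
    exact ⟨⟨by omega, by omega, by omega⟩, h1, h2, h4, h5, h6⟩

lemma side_bounds {l r : ℕ} {T : Finset (ℕ × ℕ)} (hsub : T ⊆ allDiags l r) {x y : ℕ}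
    (h : IsSide l r T x y) : l ≤ x ∧ y ≤ r := by
  rcases h with h | h
  · unfold IsEdge at h; omega
  · have := diag_fact hsub h; omega

lemma triangle_bounds {l r : ℕ} {T : Finset (ℕ × ℕ)} (hsub : T ⊆ allDiags l r)
    {a b c : ℕ} (h : (a, b, c) ∈ triangles l r T) :
    l ≤ a ∧ a < b ∧ b < c ∧ c ≤ r := by
  rw [mem_triangles] at h
  have := side_bounds hsub h.2.2.2.1
  exact ⟨this.1, h.1, h.2.1, h.2.2.1⟩


lemma triangles_glue {l r j : ℕ} {T₁ T₂ : Finset (ℕ × ℕ)} (hj1 : l < j) (hj2 : j < r)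
    (h1 : T₁ ∈ triangulations l j) (h2 : T₂ ∈ triangulations j r) :
    triangles l r (glue l r j T₁ T₂) =
      insert (l, j, r) (triangles l j T₁ ∪ triangles j r T₂) := by
  have hs1 := (mem_triangulations.mp h1).1
  have hs2 := (mem_triangulations.mp h2).1
  have hgs := glue_subset hs1 hs2 hj1 hj2
  -- side conversion lemmas
  have sideUp₁ : ∀ x y : ℕ, IsSide l j T₁ x y → IsSide l r (glue l r j T₁ T₂) x y := by
    intro x y h
    rcases h with h | h
    · rcases h with ⟨ha, hb, hc⟩ | ⟨ha, hb⟩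
      · exact Or.inl (Or.inl ⟨ha, hb, by omega⟩)
      · rcases Nat.lt_or_ge (l + 1) j with hy | hy
        · exact Or.inr (mem_glue.mpr (Or.inr (Or.inr (Or.inl ⟨hy,
            by rw [Prod.mk.injEq]; exact ⟨ha, hb⟩⟩))))
        · exact Or.inl (Or.inl ⟨by omega, by omega, by omega⟩)
    · exact Or.inr (mem_glue.mpr (Or.inl h))
  have sideUp₂ : ∀ x y : ℕ, IsSide j r T₂ x y → IsSide l r (glue l r j T₁ T₂) x y := by
    intro x y h
    rcases h with h | h
    · rcases h with ⟨ha, hb, hc⟩ | ⟨ha, hb⟩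
      · exact Or.inl (Or.inl ⟨by omega, hb, by omega⟩)
      · rcases Nat.lt_or_ge (j + 1) r with hy | hy
        · exact Or.inr (mem_glue.mpr (Or.inr (Or.inr (Or.inr ⟨hy,
            by rw [Prod.mk.injEq]; exact ⟨ha, hb⟩⟩))))
        · exact Or.inl (Or.inl ⟨by omega, by omega, by omega⟩)
    · exact Or.inr (mem_glue.mpr (Or.inr (Or.inl h)))
  have sideDown₁ : ∀ x y : ℕ, x < y → y ≤ j →
      IsSide l r (glue l r j T₁ T₂) x y → IsSide l j T₁ x y := by
    intro x y hxy hyj h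
    rcases h with h | h
    · rcases h with ⟨ha, hb, hc⟩ | ⟨ha, hb⟩
      · exact Or.inl (Or.inl ⟨ha, hb, by omega⟩)
      · omega
    · rw [mem_glue] at h
      rcases h with h | h | ⟨hlt, h⟩ | ⟨hlt, h⟩
      · exact Or.inr h
      · have := diag_fact hs2 h; omega
      · rw [Prod.mk.injEq] at h
        exact Or.inl (Or.inr ⟨h.1, h.2⟩)
      · rw [Prod.mk.injEq] at h; omega
  have sideDown₂ : ∀ x y : ℕ, j ≤ x → x < y → y ≤ r →
      IsSide l r (glue l r j T₁ T₂) x y → IsSide j r T₂ x y := by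
    intro x y hjx hxy hyr h
    rcases h with h | h
    · rcases h with ⟨ha, hb, hc⟩ | ⟨ha, hb⟩
      · exact Or.inl (Or.inl ⟨hjx, hb, hc⟩)
      · omega
    · rw [mem_glue] at h
      rcases h with h | h | ⟨hlt, h⟩ | ⟨hlt, h⟩
      · have := diag_fact hs1 h; omega
      · exact Or.inr h
      · rw [Prod.mk.injEq] at h; omega
      · rw [Prod.mk.injEq] at h
        exact Or.inl (Or.inr ⟨h.1, h.2⟩)
  ext ⟨a, b, c⟩
  rw [mem_insert, mem_union, mem_triangles]
  constructor
  · rintro ⟨hab, hbc, hcr, hS1, hS2, hS3⟩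
    have hla : l ≤ a := (side_bounds hgs hS1).1
    by_cases hcj : c ≤ j
    · right; left
      rw [mem_triangles]
      exact ⟨hab, hbc, hcj, sideDown₁ _ _ hab (by omega) hS1,
        sideDown₁ _ _ hbc hcj hS2, sideDown₁ _ _ (by omega) hcj hS3⟩
    by_cases hja : j ≤ a
    · right; right
      rw [mem_triangles]
      exact ⟨hab, hbc, hcr, sideDown₂ _ _ hja hab (by omega) hS1,
        sideDown₂ _ _ (by omega) hbc hcr hS2, sideDown₂ _ _ hja (by omega) hcr hS3⟩
    push_neg at hcj hja
    -- a < j < c ; show (a,b,c) = (l,j,r)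
    left
    have hac : a = l ∧ c = r := by
      rcases hS3 with h | h
      · rcases h with ⟨ha, hb, hc⟩ | ⟨ha, hb⟩
        · omega
        · exact ⟨ha, hb⟩
      · rw [mem_glue] at h
        rcases h with h | h | ⟨hlt, h⟩ | ⟨hlt, h⟩
        · have := diag_fact hs1 h; omega
        · have := diag_fact hs2 h; omega
        · rw [Prod.mk.injEq] at h; omega
        · rw [Prod.mk.injEq] at h; omega
    obtain ⟨hal, hcr'⟩ := hac
    have hbj : b = j := by
      rcases Nat.lt_trichotomy b j with hb | hb | hb
      · -- side {b, c} with b < j < c = r : impossible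
        exfalso
        rcases hS2 with h | h
        · rcases h with ⟨ha, hb', hc⟩ | ⟨ha, hb'⟩
          · omega
          · omega
        · rw [mem_glue] at h
          rcases h with h | h | ⟨hlt, h⟩ | ⟨hlt, h⟩
          · have := diag_fact hs1 h; omega
          · have := diag_fact hs2 h; omega
          · rw [Prod.mk.injEq] at h; omega
          · rw [Prod.mk.injEq] at h; omega
      · exact hb
      · -- side {a, b} with a = l < j < b : impossible
        exfalso
        rcases hS1 with h | h
        · rcases h with ⟨ha, hb', hc⟩ | ⟨ha, hb'⟩
          · omega
          · omega
        · rw [mem_glue] at h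
          rcases h with h | h | ⟨hlt, h⟩ | ⟨hlt, h⟩
          · have := diag_fact hs1 h; omega
          · have := diag_fact hs2 h; omega
          · rw [Prod.mk.injEq] at h; omega
          · rw [Prod.mk.injEq] at h; omega
    rw [Prod.mk.injEq, Prod.mk.injEq]
    exact ⟨hal, hbj, hcr'⟩
  · rintro (h | h | h)
    · rw [Prod.mk.injEq, Prod.mk.injEq] at h
      obtain ⟨h1, h2, h3⟩ := h
      refine ⟨by omega, by omega, by omega, ?_, ?_, Or.inl (Or.inr ⟨h1, h3⟩)⟩
      · rcases Nat.lt_or_ge (l + 1) j with hy | hy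
        · exact Or.inr (mem_glue.mpr (Or.inr (Or.inr (Or.inl ⟨hy,
            by rw [Prod.mk.injEq]; exact ⟨h1, h2⟩⟩))))
        · exact Or.inl (Or.inl ⟨by omega, by omega, by omega⟩)
      · rcases Nat.lt_or_ge (j + 1) r with hy | hy
        · exact Or.inr (mem_glue.mpr (Or.inr (Or.inr (Or.inr ⟨hy,
            by rw [Prod.mk.injEq]; exact ⟨h2, h3⟩⟩))))
        · exact Or.inl (Or.inl ⟨by omega, by omega, by omega⟩)
    · rw [mem_triangles] at h
      obtain ⟨hab, hbc, hcj, hS1, hS2, hS3⟩ := h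
      exact ⟨hab, hbc, by omega, sideUp₁ _ _ hS1, sideUp₁ _ _ hS2, sideUp₁ _ _ hS3⟩
    · rw [mem_triangles] at h
      obtain ⟨hab, hbc, hcr, hS1, hS2, hS3⟩ := h
      exact ⟨hab, hbc, hcr, sideUp₂ _ _ hS1, sideUp₂ _ _ hS2, sideUp₂ _ _ hS3⟩

lemma triangle_sum_glue {M : Type*} [AddCommMonoid M] {l r j : ℕ} {T₁ T₂ : Finset (ℕ × ℕ)}
    (hj1 : l < j) (hj2 : j < r)
    (h1 : T₁ ∈ triangulations l j) (h2 : T₂ ∈ triangulations j r) (F : ℕ × ℕ × ℕ → M) :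
    ∑ t ∈ triangles l r (glue l r j T₁ T₂), F t =
      F (l, j, r) + ((∑ t ∈ triangles l j T₁, F t) + ∑ t ∈ triangles j r T₂, F t) := by
  have hs1 := (mem_triangulations.mp h1).1
  have hs2 := (mem_triangulations.mp h2).1
  rw [triangles_glue hj1 hj2 h1 h2]
  have hdisj : Disjoint (triangles l j T₁) (triangles j r T₂) := by
    rw [Finset.disjoint_left]
    rintro ⟨a, b, c⟩ hA hB
    have bA := triangle_bounds hs1 hA
    have bB := triangle_bounds hs2 hB
    have : c ≤ j := (mem_triangles.mp hA).2.2.1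
    omega
  have hnotmem : (l, j, r) ∉ triangles l j T₁ ∪ triangles j r T₂ := by
    rw [mem_union]
    rintro (h | h)
    · have : r ≤ j := (mem_triangles.mp h).2.2.1
      omega
    · have := triangle_bounds hs2 h
      omega
  rw [Finset.sum_insert hnotmem, Finset.sum_union hdisj]
lemma catalan_succ_range (n : ℕ) :
    catalan (n + 1) = ∑ i ∈ range (n + 1), catalan i * catalan (n - i) := by
  rw [catalan_succ, ← Fin.sum_univ_eq_sum_range]

lemma allDiags_empty {l r : ℕ} (h : r ≤ l + 2) : allDiags l r = ∅ := by
  ext ⟨a, b⟩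
  rw [mem_allDiags']
  simp only [Finset.notMem_empty, iff_false]
  omega

lemma triangulations_small {l r : ℕ} (h : r ≤ l + 2) : triangulations l r = {∅} := by
  ext T
  rw [mem_triangulations, Finset.mem_singleton]
  constructor
  · rintro ⟨hsub, -, -⟩
    rw [allDiags_empty h] at hsub
    exact Finset.subset_empty.mp hsub
  · rintro rfl
    refine ⟨Finset.empty_subset _, by simp; omega, by simp⟩

lemma triangulations_card :
    ∀ d l r : ℕ, l < r → r - l ≤ d → (triangulations l r).card = catalan (r - l - 1) := by
  intro d
  induction d with
  | zero => intro l r h1 h2; omega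
  | succ d ih =>
    intro l r h1 h2
    rcases Nat.lt_or_ge (l + 2) r with hbig | hsmall
    · rw [card_eq_sum_ones, sum_decomp l r (by omega) (fun _ => (1 : ℕ))]
      have hstep : ∀ j ∈ Ioo l r,
          (∑ T₁ ∈ triangulations l j, ∑ T₂ ∈ triangulations j r, (1 : ℕ)) =
            catalan (j - l - 1) * catalan (r - j - 1) := by
        intro j hj
        rw [Finset.mem_Ioo] at hj
        rw [Finset.sum_const, Finset.sum_const, smul_eq_mul, smul_eq_mul, mul_one,
          ih l j hj.1 (by omega), ih j r hj.2 (by omega)]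
      rw [Finset.sum_congr rfl hstep]
      have : r - l - 1 = (r - l - 2) + 1 := by omega
      rw [this, catalan_succ_range]
      apply Finset.sum_nbij' (fun j => j - l - 1) (fun i => i + l + 1)
      · intro a ha
        rw [Finset.mem_Ioo] at ha
        rw [Finset.mem_range]
        omega
      · intro a ha
        rw [Finset.mem_range] at ha
        rw [Finset.mem_Ioo]
        omega
      · intro a ha
        rw [Finset.mem_Ioo] at ha
        omega
      · intro a ha
        rw [Finset.mem_range] at ha
        omega
      · intro a ha
        rw [Finset.mem_Ioo] at ha
        have e1 : r - a - 1 = (r - l - 2) - (a - l - 1) := by omega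
        rw [e1]
    · rw [triangulations_small hsmall, Finset.card_singleton]
      rcases Nat.eq_or_lt_of_le hsmall with h | h
      · have : r - l - 1 = 1 := by omega
        rw [this, catalan_one]
      · have : r - l - 1 = 0 := by omega
        rw [this, catalan_zero]
lemma triangulations_shift_mem {l r k : ℕ} {T : Finset (ℕ × ℕ)}
    (hT : T ∈ triangulations l r) :
    T.image (fun p => (p.1 + k, p.2 + k)) ∈ triangulations (l + k) (r + k) := by
  rw [mem_triangulations] at hT ⊢
  obtain ⟨hsub, hcard, hnc⟩ := hT
  have hinj : Set.InjOn (fun p : ℕ × ℕ => (p.1 + k, p.2 + k)) T := by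
    rintro ⟨a, b⟩ - ⟨c, d⟩ - h
    simp only [Prod.mk.injEq] at h ⊢
    omega
  refine ⟨?_, ?_, ?_⟩
  · intro q hq
    rw [mem_image] at hq
    obtain ⟨⟨a, b⟩, hp, rfl⟩ := hq
    have := diag_fact hsub hp
    rw [mem_allDiags']
    omega
  · rw [Finset.card_image_of_injOn hinj, hcard]; omega
  · intro q1 hq1 q2 hq2
    rw [mem_image] at hq1 hq2
    obtain ⟨⟨a, b⟩, hp1, rfl⟩ := hq1
    obtain ⟨⟨c, d⟩, hp2, rfl⟩ := hq2
    have := hnc _ hp1 _ hp2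
    simp only [Crosses] at this ⊢
    omega

lemma sum_tri_shift {M : Type*} [AddCommMonoid M] (l r k : ℕ) (H : Finset (ℕ × ℕ) → M) :
    ∑ T ∈ triangulations (l + k) (r + k), H T =
      ∑ T ∈ triangulations l r, H (T.image (fun p => (p.1 + k, p.2 + k))) := by
  symm
  apply Finset.sum_bij (fun T _ => T.image (fun p : ℕ × ℕ => (p.1 + k, p.2 + k)))
  · intro T hT; exact triangulations_shift_mem hT
  · intro T hT T' hT' hEq
    have : Function.Injective (fun p : ℕ × ℕ => (p.1 + k, p.2 + k)) := by
      rintro ⟨a, b⟩ ⟨c, d⟩ h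
      simp only [Prod.mk.injEq] at h ⊢
      omega
    exact Finset.image_injective this hEq
  · intro T' hT'
    rw [mem_triangulations] at hT'
    obtain ⟨hsub, hcard, hnc⟩ := hT'
    have hco : ∀ p ∈ T', l + k ≤ p.1 ∧ p.1 + 2 ≤ p.2 ∧ p.2 ≤ r + k ∧
        ¬(p.1 = l + k ∧ p.2 = r + k) := by
      rintro ⟨a, b⟩ hp; exact diag_fact hsub hp
    refine ⟨T'.image (fun p => (p.1 - k, p.2 - k)), ?_, ?_⟩
    · rw [mem_triangulations]
      have hinj : Set.InjOn (fun p : ℕ × ℕ => (p.1 - k, p.2 - k)) T' := by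
        rintro ⟨a, b⟩ ha ⟨c, d⟩ hc h
        have h1 := hco _ ha
        have h2 := hco _ hc
        simp only [Prod.mk.injEq] at h ⊢
        dsimp only at h1 h2
        omega
      refine ⟨?_, ?_, ?_⟩
      · intro q hq
        rw [mem_image] at hq
        obtain ⟨⟨a, b⟩, hp, rfl⟩ := hq
        have := hco _ hp
        rw [mem_allDiags']
        dsimp only at this ⊢
        omega
      · rw [Finset.card_image_of_injOn hinj, hcard]; omega
      · intro q1 hq1 q2 hq2
        rw [mem_image] at hq1 hq2
        obtain ⟨⟨a, b⟩, hp1, rfl⟩ := hq1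
        obtain ⟨⟨c, d⟩, hp2, rfl⟩ := hq2
        have h1 := hco _ hp1
        have h2 := hco _ hp2
        have := hnc _ hp1 _ hp2
        simp only [Crosses] at this ⊢
        dsimp only at h1 h2
        omega
    · rw [Finset.image_image]
      ext ⟨a, b⟩
      rw [mem_image]
      constructor
      · rintro ⟨⟨c, d⟩, hp, hEq⟩
        have := hco _ hp
        simp only [Function.comp] at hEq
        dsimp only at hEq this
        rw [Prod.mk.injEq] at hEq
        have : (c, d) = (a, b) := by rw [Prod.mk.injEq]; omega
        rwa [← this]
      · intro hp
        refine ⟨(a, b), hp, ?_⟩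
        have := hco _ hp
        simp only [Function.comp, Prod.mk.injEq]
        dsimp only at this
        omega
  · intro a ha
    rfl

lemma image_subset_allDiags {l r k : ℕ} {T : Finset (ℕ × ℕ)} (hsub : T ⊆ allDiags l r) :
    T.image (fun p => (p.1 + k, p.2 + k)) ⊆ allDiags (l + k) (r + k) := by
  intro q hq
  rw [mem_image] at hq
  obtain ⟨⟨a, b⟩, hp, rfl⟩ := hq
  have := diag_fact hsub hp
  rw [mem_allDiags']
  omega

lemma triangles_shift {l r k : ℕ} {T : Finset (ℕ × ℕ)} (hsub : T ⊆ allDiags l r) :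
    triangles (l + k) (r + k) (T.image (fun p => (p.1 + k, p.2 + k))) =
      (triangles l r T).image (fun t => (t.1 + k, t.2.1 + k, t.2.2 + k)) := by
  have hmemiff : ∀ x y : ℕ, ((x + k, y + k) ∈ T.image (fun p : ℕ × ℕ => (p.1 + k, p.2 + k)))
      ↔ (x, y) ∈ T := by
    intro x y
    rw [mem_image]
    constructor
    · rintro ⟨⟨c, d⟩, hp, hEq⟩
      rw [Prod.mk.injEq] at hEq
      dsimp only at hEq
      have : (c, d) = (x, y) := by rw [Prod.mk.injEq]; omega
      rwa [← this]
    · intro hp; exact ⟨(x, y), hp, rfl⟩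
  have hsub' := image_subset_allDiags (k := k) hsub
  have sideUp : ∀ x y : ℕ, IsSide l r T x y →
      IsSide (l + k) (r + k) (T.image (fun p => (p.1 + k, p.2 + k))) (x + k) (y + k) := by
    intro x y h
    rcases h with h | h
    · rcases h with ⟨h1, h2, h3⟩ | ⟨h1, h2⟩
      · exact Or.inl (Or.inl ⟨by omega, by omega, by omega⟩)
      · exact Or.inl (Or.inr ⟨by omega, by omega⟩)
    · exact Or.inr ((hmemiff x y).mpr h)
  have sideDown : ∀ x y : ℕ, k ≤ x → k ≤ y →
      IsSide (l + k) (r + k) (T.image (fun p => (p.1 + k, p.2 + k))) x y →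
      IsSide l r T (x - k) (y - k) := by
    intro x y hkx hky h
    rcases h with h | h
    · rcases h with ⟨h1, h2, h3⟩ | ⟨h1, h2⟩
      · exact Or.inl (Or.inl ⟨by omega, by omega, by omega⟩)
      · exact Or.inl (Or.inr ⟨by omega, by omega⟩)
    · rw [mem_image] at h
      obtain ⟨⟨c, d⟩, hp, hEq⟩ := h
      rw [Prod.mk.injEq] at hEq
      dsimp only at hEq
      refine Or.inr ?_
      rw [show x - k = c by omega, show y - k = d by omega]
      exact hp
  ext ⟨a, b, c⟩
  rw [mem_triangles, mem_image]
  constructor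
  · rintro ⟨hab, hbc, hcr, hS1, hS2, hS3⟩
    have hla : l + k ≤ a := (side_bounds hsub' hS1).1
    refine ⟨(a - k, b - k, c - k), ?_, by rw [Prod.mk.injEq, Prod.mk.injEq]; dsimp only; omega⟩
    rw [mem_triangles]
    exact ⟨by omega, by omega, by omega, sideDown _ _ (by omega) (by omega) hS1,
      sideDown _ _ (by omega) (by omega) hS2, sideDown _ _ (by omega) (by omega) hS3⟩
  · rintro ⟨⟨x, y, z⟩, ht, hEq⟩
    rw [mem_triangles] at ht
    obtain ⟨h1, h2, h3, h4, h5, h6⟩ := ht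
    rw [Prod.mk.injEq, Prod.mk.injEq] at hEq
    dsimp only at hEq
    obtain ⟨rfl, rfl, rfl⟩ := hEq
    exact ⟨by omega, by omega, by omega, sideUp _ _ h4, sideUp _ _ h5, sideUp _ _ h6⟩

lemma S_shift (l r k : ℕ) (f : ℕ → ℕ → ℕ → ℂ) (φ : ℂ → ℂ)
    (hf : ∀ a b c : ℕ, l ≤ a → a < b → b < c → c ≤ r → f a b c = f (a + k) (b + k) (c + k)) :
    ∑ T ∈ triangulations (l + k) (r + k),
        φ (∑ t ∈ triangles (l + k) (r + k) T, f t.1 t.2.1 t.2.2) =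
      ∑ T ∈ triangulations l r, φ (∑ t ∈ triangles l r T, f t.1 t.2.1 t.2.2) := by
  rw [sum_tri_shift l r k
    (fun T => φ (∑ t ∈ triangles (l + k) (r + k) T, f t.1 t.2.1 t.2.2))]
  apply Finset.sum_congr rfl
  intro T hT
  have hsub := (mem_triangulations.mp hT).1
  congr 1
  rw [triangles_shift hsub, Finset.sum_image]
  · apply Finset.sum_congr rfl
    intro ⟨a, b, c⟩ ht
    have hb := triangle_bounds hsub ht
    dsimp only
    exact (hf a b c hb.1 hb.2.1 hb.2.2.1 hb.2.2.2).symm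
  · rintro ⟨a, b, c⟩ - ⟨x, y, z⟩ - h
    rw [Prod.mk.injEq, Prod.mk.injEq] at h ⊢
    dsimp only at h
    omega
lemma centralBinom_rec (m : ℕ) :
    Nat.centralBinom (m + 1) = 2 * ∑ i ∈ range (m + 1), catalan i * Nat.centralBinom (m - i) := by
  have h1 : (m + 2) * catalan (m + 1) = Nat.centralBinom (m + 1) :=
    succ_mul_catalan_eq_centralBinom (m + 1)
  rw [← h1, catalan_succ_range, Finset.mul_sum]
  have h2 : ∀ i ∈ range (m + 1), catalan i * Nat.centralBinom (m - i) =
      (m - i + 1) * (catalan i * catalan (m - i)) := by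
    intro i hi
    rw [← succ_mul_catalan_eq_centralBinom (m - i)]
    ring
  rw [Finset.sum_congr rfl h2]
  have refl := Finset.sum_range_reflect
    (fun i => (m - i + 1) * (catalan i * catalan (m - i))) (m + 1)
  have h3 : ∀ j ∈ range (m + 1),
      (m - (m + 1 - 1 - j) + 1) * (catalan (m + 1 - 1 - j) * catalan (m - (m + 1 - 1 - j))) =
        (j + 1) * (catalan j * catalan (m - j)) := by
    intro j hj
    rw [Finset.mem_range] at hj
    rw [show m + 1 - 1 - j = m - j by omega, show m - (m - j) = j by omega]
    ring
  rw [Finset.sum_congr rfl h3] at refl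
  have expand : ∀ i ∈ range (m + 1),
      (m + 2) * (catalan i * catalan (m - i)) =
        (m - i + 1) * (catalan i * catalan (m - i)) + (i + 1) * (catalan i * catalan (m - i)) := by
    intro i hi
    rw [Finset.mem_range] at hi
    have : (m + 2) = (m - i + 1) + (i + 1) := by omega
    rw [this, add_mul]
  rw [Finset.sum_congr rfl expand, Finset.sum_add_distrib, refl, two_mul]

lemma centralBinom_rec_cast (d : ℕ) (hd : 1 ≤ d) :
    ((d.centralBinom : ℂ)) = 2 * ∑ i ∈ range d, (catalan i : ℂ) * ((d - 1 - i).centralBinom : ℂ) := by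
  obtain ⟨m, rfl⟩ : ∃ m, d = m + 1 := ⟨d - 1, by omega⟩
  simp only [Nat.add_sub_cancel]
  exact_mod_cast centralBinom_rec m

lemma master (n : ℕ) (hn : 3 ≤ n) (W c : ℕ → ℂ)
    (hrec : ∀ s, 1 ≤ s → s ≤ n - 2 → W s = c s +
      ∑ j ∈ Icc (s + 1) (n - 1),
        ((catalan (n - j - 1) : ℂ) * W (s + n - j) + (catalan (j - s - 1) : ℂ) * W j))
    (h0 : W (n - 1) = 0) :
    ∀ m s, 1 ≤ s → s ≤ n - 1 → n - 1 - s ≤ m →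
      W s = ∑ t ∈ Icc s (n - 2), c t * (((t - s).centralBinom : ℕ) : ℂ) := by
  intro m
  induction m with
  | zero =>
    intro s hs1 hs2 hs3
    have hs : s = n - 1 := by omega
    rw [hs, h0, Finset.Icc_eq_empty (by omega), Finset.sum_empty]
  | succ m ih =>
    intro s hs1 hs2 hs3
    rcases Nat.eq_or_lt_of_le hs2 with hs | hs
    · rw [hs, h0, Finset.Icc_eq_empty (by omega), Finset.sum_empty]
    have hs2' : s ≤ n - 2 := by omega
    rw [hrec s hs1 hs2']
    have hB : ∀ j ∈ Icc (s + 1) (n - 1),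
        (catalan (n - j - 1) : ℂ) * W (s + n - j) + (catalan (j - s - 1) : ℂ) * W j =
          (catalan (n - j - 1) : ℂ) *
              (∑ t ∈ Icc (s + n - j) (n - 2), c t * (((t - (s + n - j)).centralBinom : ℕ) : ℂ)) +
            (catalan (j - s - 1) : ℂ) *
              (∑ t ∈ Icc j (n - 2), c t * (((t - j).centralBinom : ℕ) : ℂ)) := by
      intro j hj
      rw [Finset.mem_Icc] at hj
      rw [ih (s + n - j) (by omega) (by omega) (by omega), ih j (by omega) (by omega) (by omega)]
    rw [Finset.sum_congr rfl hB, Finset.sum_add_distrib]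
    have hswap : (∑ j ∈ Icc (s + 1) (n - 1), (catalan (n - j - 1) : ℂ) *
        (∑ t ∈ Icc (s + n - j) (n - 2), c t * (((t - (s + n - j)).centralBinom : ℕ) : ℂ))) =
        ∑ j ∈ Icc (s + 1) (n - 1), (catalan (j - s - 1) : ℂ) *
          (∑ t ∈ Icc j (n - 2), c t * (((t - j).centralBinom : ℕ) : ℂ)) := by
      apply Finset.sum_nbij' (fun j => s + n - j) (fun j => s + n - j)
      · intro a ha; rw [Finset.mem_Icc] at ha ⊢; omega
      · intro a ha; rw [Finset.mem_Icc] at ha ⊢; omega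
      · intro a ha; rw [Finset.mem_Icc] at ha; omega
      · intro a ha; rw [Finset.mem_Icc] at ha; omega
      · intro a ha
        rw [Finset.mem_Icc] at ha
        rw [show s + n - a - s - 1 = n - a - 1 by omega]
    rw [hswap, ← two_mul]
    have hpush : ∀ j ∈ Icc (s + 1) (n - 1), (catalan (j - s - 1) : ℂ) *
        (∑ t ∈ Icc j (n - 2), c t * (((t - j).centralBinom : ℕ) : ℂ)) =
        ∑ t ∈ Icc j (n - 2), (catalan (j - s - 1) : ℂ) *
          (c t * (((t - j).centralBinom : ℕ) : ℂ)) := by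
      intro j hj
      rw [Finset.mul_sum]
    rw [Finset.sum_congr rfl hpush]
    rw [Finset.sum_comm' (s := Icc (s + 1) (n - 1)) (t := fun j => Icc j (n - 2))
      (t' := Icc (s + 1) (n - 2)) (s' := fun t => Icc (s + 1) t)
      (by intro x y; rw [Finset.mem_Icc, Finset.mem_Icc, Finset.mem_Icc, Finset.mem_Icc]; omega)]
    have hinner : ∀ t ∈ Icc (s + 1) (n - 2),
        (2 : ℂ) * ∑ j ∈ Icc (s + 1) t, (catalan (j - s - 1) : ℂ) *
            (c t * (((t - j).centralBinom : ℕ) : ℂ)) =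
          c t * (((t - s).centralBinom : ℕ) : ℂ) := by
      intro t ht
      rw [Finset.mem_Icc] at ht
      have hid := centralBinom_rec_cast (t - s) (by omega)
      have hre : (∑ j ∈ Icc (s + 1) t, (catalan (j - s - 1) : ℂ) *
          (c t * (((t - j).centralBinom : ℕ) : ℂ))) =
          c t * ∑ i ∈ range (t - s), (catalan i : ℂ) * (((t - s - 1 - i).centralBinom : ℕ) : ℂ) := by
        rw [Finset.mul_sum]
        apply Finset.sum_nbij' (fun j => j - s - 1) (fun i => s + 1 + i)
        · intro a ha; rw [Finset.mem_Icc] at ha; rw [Finset.mem_range]; omega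
        · intro a ha; rw [Finset.mem_range] at ha; rw [Finset.mem_Icc]; omega
        · intro a ha; rw [Finset.mem_Icc] at ha; omega
        · intro a ha; rw [Finset.mem_range] at ha; omega
        · intro a ha
          rw [Finset.mem_Icc] at ha
          rw [show t - s - 1 - (a - s - 1) = t - a by omega]
          ring
      rw [hre, hid]
      ring
    calc c s + (2 : ℂ) * ∑ t ∈ Icc (s + 1) (n - 2), ∑ j ∈ Icc (s + 1) t,
            (catalan (j - s - 1) : ℂ) * (c t * (((t - j).centralBinom : ℕ) : ℂ))
        = c s + ∑ t ∈ Icc (s + 1) (n - 2), (2 : ℂ) * ∑ j ∈ Icc (s + 1) t,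
            (catalan (j - s - 1) : ℂ) * (c t * (((t - j).centralBinom : ℕ) : ℂ)) := by
          rw [Finset.mul_sum]
      _ = c s + ∑ t ∈ Icc (s + 1) (n - 2), c t * (((t - s).centralBinom : ℕ) : ℂ) := by
          rw [Finset.sum_congr rfl hinner]
      _ = ∑ t ∈ Icc s (n - 2), c t * (((t - s).centralBinom : ℕ) : ℂ) := by
          rw [Finset.Icc_eq_cons_Ioc (by omega : s ≤ n - 2), Finset.sum_cons,
            ← Finset.Icc_add_one_left_eq_Ioc]
          rw [show s - s = 0 by omega, Nat.centralBinom_zero]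
          push_cast
          ring
lemma dsum1 {α β : Type*} (A : Finset α) (B : Finset β) (K : ℂ) (a : α → ℂ) (b : β → ℂ) :
    ∑ x ∈ A, ∑ y ∈ B, (K + (a x + b y)) =
      (A.card : ℂ) * (B.card : ℂ) * K + (B.card : ℂ) * (∑ x ∈ A, a x) +
        (A.card : ℂ) * (∑ y ∈ B, b y) := by
  simp only [Finset.sum_add_distrib, Finset.sum_const, nsmul_eq_mul, ← Finset.mul_sum,
    ← Finset.sum_mul]
  ring

lemma dsum2 {α β : Type*} (A : Finset α) (B : Finset β) (K : ℂ) (a : α → ℂ) (b : β → ℂ) :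
    ∑ x ∈ A, ∑ y ∈ B, (K + (a x + b y)) ^ 2 =
      (A.card : ℂ) * (B.card : ℂ) * K ^ 2 +
        2 * K * ((B.card : ℂ) * (∑ x ∈ A, a x) + (A.card : ℂ) * (∑ y ∈ B, b y)) +
        ((B.card : ℂ) * (∑ x ∈ A, (a x) ^ 2) + (A.card : ℂ) * (∑ y ∈ B, (b y) ^ 2) +
          2 * (∑ x ∈ A, a x) * (∑ y ∈ B, b y)) := by
  have h : ∀ x ∈ A, (∑ y ∈ B, (K + (a x + b y)) ^ 2) =
      (B.card : ℂ) * (K ^ 2 + 2 * K * a x + (a x) ^ 2) +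
        (2 * K + 2 * a x) * (∑ y ∈ B, b y) + ∑ y ∈ B, (b y) ^ 2 := by
    intro x _
    have h2 : ∀ y ∈ B, (K + (a x + b y)) ^ 2 =
        (K ^ 2 + 2 * K * a x + (a x) ^ 2) + ((2 * K + 2 * a x) * b y + (b y) ^ 2) := by
      intro y _; ring
    rw [Finset.sum_congr rfl h2, Finset.sum_add_distrib, Finset.sum_const, nsmul_eq_mul,
      Finset.sum_add_distrib, ← Finset.mul_sum]
    ring
  rw [Finset.sum_congr rfl h]
  simp only [Finset.sum_add_distrib, Finset.sum_const, nsmul_eq_mul, ← Finset.mul_sum,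
    ← Finset.sum_mul]
  ring

lemma Ioo_eq_Icc {s n : ℕ} : Ioo s n = Icc (s + 1) (n - 1) := by
  ext x
  rw [Finset.mem_Ioo, Finset.mem_Icc]
  omega

lemma catalan_pos' (m : ℕ) : 0 < catalan m := by
  have h := succ_mul_catalan_eq_centralBinom m
  have h2 := Nat.centralBinom_pos m
  by_contra hc
  push_neg at hc
  have : catalan m = 0 := by omega
  rw [this, mul_zero] at h
  omega

lemma catalan_cast_ne_zero (m : ℕ) : ((catalan m : ℕ) : ℂ) ≠ 0 :=
  Nat.cast_ne_zero.mpr (catalan_pos' m).ne'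

lemma triangulations_card' {l r : ℕ} (h : l < r) :
    ((triangulations l r).card : ℂ) = ((catalan (r - l - 1) : ℕ) : ℂ) := by
  rw [triangulations_card (r - l) l r h le_rfl]

lemma shift_to_end (n : ℕ) (f : ℕ → ℕ → ℕ → ℂ) (F : ℕ → ℕ → ℂ)
    (hf : ∀ l j r : ℕ, 1 ≤ l → l < j → j < r → r ≤ n → f l j r = F (j - l) (r - j))
    (φ : ℂ → ℂ) (s j : ℕ) (hs : 1 ≤ s) (hj : j ≤ n) :
    ∑ T ∈ triangulations s j, φ (∑ t ∈ triangles s j T, f t.1 t.2.1 t.2.2) =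
      ∑ T ∈ triangulations (s + n - j) n, φ (∑ t ∈ triangles (s + n - j) n T, f t.1 t.2.1 t.2.2) := by
  obtain ⟨k, hk⟩ : ∃ k, n = j + k := ⟨n - j, by omega⟩
  rw [show s + n - j = s + k by omega]
  conv_rhs => rw [hk]
  refine (S_shift s j k f φ ?_).symm
  intro a b c ha hab hbc hcj
  rw [hf a b c (by omega) hab hbc (by omega),
    hf (a + k) (b + k) (c + k) (by omega) (by omega) (by omega) (by omega),
    show b + k - (a + k) = b - a by omega, show c + k - (b + k) = c - b by omega]

lemma triangles_tiny (l : ℕ) : triangles l (l + 1) (∅ : Finset (ℕ × ℕ)) = ∅ := by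
  ext ⟨a, b, c⟩
  rw [mem_triangles]
  simp only [Finset.notMem_empty, iff_false]
  rintro ⟨hab, hbc, hcr, hS1, hS2, hS3⟩
  rcases hS1 with h | h
  · unfold IsEdge at h; omega
  · exact absurd h (Finset.notMem_empty _)
/-- the variance formula of Theorem 1(2). -/
theorem variance_formula (n : ℕ) (hn : 4 ≤ n) (f : ℕ → ℕ → ℕ → ℂ) (F : ℕ → ℕ → ℂ)
    (hf : ∀ l j r : ℕ, 1 ≤ l → l < j → j < r → r ≤ n → f l j r = F (j - l) (r - j))
    (e β lam : ℕ → ℂ)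
    (he : ∀ l : ℕ, 1 ≤ l → l ≤ n - 1 →
      e l = (∑ T ∈ triangulations l n, ∑ t ∈ triangles l n T, f t.1 t.2.1 t.2.2) /
        (catalan (n - l - 1) : ℂ))
    (hβ : ∀ j : ℕ, β j = ∑ s ∈ Icc (j + 1) (n - 1),
      f j s n * (catalan (s - j - 1) : ℂ) * (catalan (n - s - 1) : ℂ))
    (hlam : ∀ s : ℕ, lam s = ∑ j ∈ Icc (s + 1) (n - 1),
      (catalan (j - s - 1) : ℂ) * (catalan (n - j - 1) : ℂ) *
        ((f s j n) ^ 2 + 2 * f s j n * (e (s + n - j) + e j) + 2 * e (s + n - j) * e j)) :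
    (∑ T ∈ triangulations 1 n, (∑ t ∈ triangles 1 n T, f t.1 t.2.1 t.2.2) ^ 2) /
          (catalan (n - 2) : ℂ) -
        ((∑ T ∈ triangulations 1 n, ∑ t ∈ triangles 1 n T, f t.1 t.2.1 t.2.2) /
          (catalan (n - 2) : ℂ)) ^ 2 =
      (∑ j ∈ Icc 1 (n - 2), lam j * ((2 * j - 2).choose (j - 1) : ℂ)) /
          (catalan (n - 2) : ℂ) -
        ((∑ j ∈ Icc 1 (n - 2), β j * ((2 * j - 2).choose (j - 1) : ℂ)) /
          (catalan (n - 2) : ℂ)) ^ 2 := by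
  classical
  -- base cases
  have htri0 : triangles (n - 1) n (∅ : Finset (ℕ × ℕ)) = ∅ := by
    obtain ⟨m, rfl⟩ : ∃ m, n = m + 1 := ⟨n - 1, by omega⟩
    simp only [Nat.add_sub_cancel]
    exact triangles_tiny m
  have hbase : triangulations (n - 1) n = {∅} := triangulations_small (by omega)
  have hW1base : (∑ T ∈ triangulations (n - 1) n,
      ∑ t ∈ triangles (n - 1) n T, f t.1 t.2.1 t.2.2) = 0 := by
    rw [hbase, Finset.sum_singleton, htri0, Finset.sum_empty]
  have hW2base : (∑ T ∈ triangulations (n - 1) n,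
      (∑ t ∈ triangles (n - 1) n T, f t.1 t.2.1 t.2.2) ^ 2) = 0 := by
    rw [hbase, Finset.sum_singleton, htri0, Finset.sum_empty]
    norm_num
  -- W1 in terms of e
  have hW1e : ∀ l : ℕ, 1 ≤ l → l ≤ n - 1 →
      (∑ T ∈ triangulations l n, ∑ t ∈ triangles l n T, f t.1 t.2.1 t.2.2) =
        e l * ((catalan (n - l - 1) : ℕ) : ℂ) := by
    intro l h1 h2
    rw [he l h1 h2, div_mul_cancel₀]
    exact catalan_cast_ne_zero _
  -- generic decomposition
  have hkey : ∀ (φ : ℂ → ℂ) (s : ℕ), 1 ≤ s → s ≤ n - 2 →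
      (∑ T ∈ triangulations s n, φ (∑ t ∈ triangles s n T, f t.1 t.2.1 t.2.2)) =
        ∑ j ∈ Icc (s + 1) (n - 1), ∑ T₁ ∈ triangulations s j, ∑ T₂ ∈ triangulations j n,
          φ (f s j n + ((∑ t ∈ triangles s j T₁, f t.1 t.2.1 t.2.2) +
            ∑ t ∈ triangles j n T₂, f t.1 t.2.1 t.2.2)) := by
    intro φ s hs1 hs2
    rw [sum_decomp s n (by omega) (fun T => φ (∑ t ∈ triangles s n T, f t.1 t.2.1 t.2.2)),
      Ioo_eq_Icc]
    apply Finset.sum_congr rfl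
    intro j hj
    rw [Finset.mem_Icc] at hj
    apply Finset.sum_congr rfl
    intro T₁ h₁
    apply Finset.sum_congr rfl
    intro T₂ h₂
    congr 1
    exact triangle_sum_glue (by omega) (by omega) h₁ h₂ (fun t => f t.1 t.2.1 t.2.2)
  have hsh := fun (φ : ℂ → ℂ) (s j : ℕ) (h1 : 1 ≤ s) (h2 : j ≤ n) =>
    shift_to_end n f F hf φ s j h1 h2
  -- recurrence for W1
  have hrec1 : ∀ s, 1 ≤ s → s ≤ n - 2 →
      (∑ T ∈ triangulations s n, ∑ t ∈ triangles s n T, f t.1 t.2.1 t.2.2) =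
        β s + ∑ j ∈ Icc (s + 1) (n - 1),
          ((catalan (n - j - 1) : ℂ) * (∑ T ∈ triangulations (s + n - j) n,
              ∑ t ∈ triangles (s + n - j) n T, f t.1 t.2.1 t.2.2) +
            (catalan (j - s - 1) : ℂ) * (∑ T ∈ triangulations j n,
              ∑ t ∈ triangles j n T, f t.1 t.2.1 t.2.2)) := by
    intro s hs1 hs2
    have h0 := hkey (fun x => x) s hs1 hs2
    rw [h0, hβ s, ← Finset.sum_add_distrib]
    apply Finset.sum_congr rfl
    intro j hj
    rw [Finset.mem_Icc] at hj
    have d1 := dsum1 (triangulations s j) (triangulations j n) (f s j n)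
      (fun T₁ => ∑ t ∈ triangles s j T₁, f t.1 t.2.1 t.2.2)
      (fun T₂ => ∑ t ∈ triangles j n T₂, f t.1 t.2.1 t.2.2)
    rw [d1, triangulations_card' (show s < j by omega), triangulations_card' (show j < n by omega)]
    have e1 := hsh (fun x => x) s j hs1 (by omega)
    rw [e1, show j - s - 1 = j - s - 1 from rfl]
    ring
  -- recurrence for W2
  have hrec2 : ∀ s, 1 ≤ s → s ≤ n - 2 →
      (∑ T ∈ triangulations s n, (∑ t ∈ triangles s n T, f t.1 t.2.1 t.2.2) ^ 2) =
        lam s + ∑ j ∈ Icc (s + 1) (n - 1),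
          ((catalan (n - j - 1) : ℂ) * (∑ T ∈ triangulations (s + n - j) n,
              (∑ t ∈ triangles (s + n - j) n T, f t.1 t.2.1 t.2.2) ^ 2) +
            (catalan (j - s - 1) : ℂ) * (∑ T ∈ triangulations j n,
              (∑ t ∈ triangles j n T, f t.1 t.2.1 t.2.2) ^ 2)) := by
    intro s hs1 hs2
    have h0 := hkey (fun x => x ^ 2) s hs1 hs2
    rw [h0, hlam s, ← Finset.sum_add_distrib]
    apply Finset.sum_congr rfl
    intro j hj
    rw [Finset.mem_Icc] at hj
    have d2 := dsum2 (triangulations s j) (triangulations j n) (f s j n)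
      (fun T₁ => ∑ t ∈ triangles s j T₁, f t.1 t.2.1 t.2.2)
      (fun T₂ => ∑ t ∈ triangles j n T₂, f t.1 t.2.1 t.2.2)
    rw [d2, triangulations_card' (show s < j by omega), triangulations_card' (show j < n by omega)]
    have e1 := hsh (fun x => x) s j hs1 (by omega)
    have e2 := hsh (fun x => x ^ 2) s j hs1 (by omega)
    rw [e1, e2, hW1e (s + n - j) (by omega) (by omega), hW1e j (by omega) (by omega),
      show n - (s + n - j) - 1 = j - s - 1 by omega]
    ring
  -- solve the two recurrences
  have hM1 := master n (by omega)
    (fun s => ∑ T ∈ triangulations s n, ∑ t ∈ triangles s n T, f t.1 t.2.1 t.2.2) β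
    hrec1 hW1base (n - 2) 1 le_rfl (by omega) (by omega)
  have hM2 := master n (by omega)
    (fun s => ∑ T ∈ triangulations s n, (∑ t ∈ triangles s n T, f t.1 t.2.1 t.2.2) ^ 2) lam
    hrec2 hW2base (n - 2) 1 le_rfl (by omega) (by omega)
  rw [hM1, hM2]
  have hconv : ∀ g : ℕ → ℂ,
      (∑ j ∈ Icc 1 (n - 2), g j * (((j - 1).centralBinom : ℕ) : ℂ)) =
        ∑ j ∈ Icc 1 (n - 2), g j * (((2 * j - 2).choose (j - 1) : ℕ) : ℂ) := by
    intro g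
    apply Finset.sum_congr rfl
    intro j hj
    rw [Finset.mem_Icc] at hj
    rw [Nat.centralBinom_eq_two_mul_choose, show 2 * (j - 1) = 2 * j - 2 by omega]
  rw [hconv β, hconv lam]
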